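/- For all β in (0,1), g⁻¹(H_b(β)) < β, where g⁻¹ is the inverse of g(x) = (x+1)log(x+1) − x log x on [0,∞) and H_b is binary entropy. -/

import Mathlib

noncomputable def g (x : ℝ) : ℝ := (x + 1) * Real.log (x + 1) - x * Real.log x

noncomputable def Hb (p : ℝ) : ℝ := -(p * Real.log p) - (1 - p) * Real.log (1 - p)

lemma g_cont : Continuous g := by
  have h1 : Continuous fun x : ℝ => (x + 1) * Real.log (x + 1) :=
    Real.continuous_mul_log.comp (continuous_id.add continuous_const)
  exact h1.sub Real.continuous_mul_log

lemma g_deriv {x : ℝ} (hx : 0 < x) :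
    HasDerivAt g (Real.log (x + 1) - Real.log x) x := by
  have h1 : HasDerivAt (fun t : ℝ => (t + 1) * Real.log (t + 1))
      ((Real.log (x + 1) + 1) * 1) x := by
    exact (Real.hasDerivAt_mul_log (by linarith)).comp x ((hasDerivAt_id x).add_const 1)
  have h2 : HasDerivAt (fun t : ℝ => t * Real.log t) (Real.log x + 1) x :=
    Real.hasDerivAt_mul_log hx.ne'
  have := h1.sub h2
  exact this.congr_deriv (by ring)

lemma g_strictMonoOn : StrictMonoOn g (Set.Ici (0:ℝ)) := by
  apply strictMonoOn_of_deriv_pos (convex_Ici 0) g_cont.continuousOn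
  intro x hx
  rw [interior_Ici] at hx
  rw [(g_deriv hx).deriv]
  have : Real.log x < Real.log (x + 1) := Real.log_lt_log hx (by linarith)
  linarith

lemma F_pos {β : ℝ} (hβ : β ∈ Set.Ioo (0:ℝ) 1) :
    0 < (β + 1) * Real.log (β + 1) + (1 - β) * Real.log (1 - β) := by
  set F : ℝ → ℝ := fun t => (t + 1) * Real.log (t + 1) + (1 - t) * Real.log (1 - t) with hF
  have hFc : Continuous F := by
    have h1 : Continuous fun t : ℝ => (t + 1) * Real.log (t + 1) :=
      Real.continuous_mul_log.comp (continuous_id.add continuous_const)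
    have h2 : Continuous fun t : ℝ => (1 - t) * Real.log (1 - t) :=
      Real.continuous_mul_log.comp (continuous_const.sub continuous_id)
    exact h1.add h2
  have hmono : StrictMonoOn F (Set.Icc (0:ℝ) 1) := by
    apply strictMonoOn_of_deriv_pos (convex_Icc 0 1) hFc.continuousOn
    intro x hx
    rw [interior_Icc] at hx
    obtain ⟨hx0, hx1⟩ := hx
    have h1 : HasDerivAt (fun t : ℝ => (t + 1) * Real.log (t + 1))
        ((Real.log (x + 1) + 1) * 1) x :=
      (Real.hasDerivAt_mul_log (by linarith)).comp x ((hasDerivAt_id x).add_const 1)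
    have h2 : HasDerivAt (fun t : ℝ => (1 - t) * Real.log (1 - t))
        ((Real.log (1 - x) + 1) * (-1)) x := by
      exact (Real.hasDerivAt_mul_log (by linarith : (1:ℝ) - x ≠ 0)).comp x
        ((hasDerivAt_id x).const_sub 1)
    have hD : HasDerivAt F (Real.log (x + 1) - Real.log (1 - x)) x := by
      have := h1.add h2
      exact this.congr_deriv (by ring)
    rw [hD.deriv]
    have : Real.log (1 - x) < Real.log (x + 1) :=
      Real.log_lt_log (by linarith) (by linarith)
    linarith
  have h0 : F 0 = 0 := by simp [hF]
  have := hmono (Set.mem_Icc.mpr ⟨le_refl 0, zero_le_one⟩)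
    (Set.mem_Icc.mpr ⟨hβ.1.le, hβ.2.le⟩) hβ.1
  rw [h0] at this
  exact this

theorem ginv_binEntropy_lt (ginv : ℝ → ℝ)
    (hinv : ∀ x ∈ Set.Ici (0:ℝ), 0 ≤ ginv x ∧ g (ginv x) = x) :
    ∀ β ∈ Set.Ioo (0:ℝ) 1, ginv (Hb β) < β := by
  intro β hβ
  obtain ⟨hβ0, hβ1⟩ := hβ
  have hlogβ : Real.log β < 0 := Real.log_neg hβ0 hβ1
  have hlog1β : Real.log (1 - β) < 0 := Real.log_neg (by linarith) (by linarith)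
  have hHb_pos : 0 < Hb β := by
    have h1 : 0 < -(β * Real.log β) := by nlinarith
    have h2 : 0 < -((1 - β) * Real.log (1 - β)) := by nlinarith
    unfold Hb; linarith
  obtain ⟨ha0, hga⟩ := hinv (Hb β) (le_of_lt hHb_pos)
  have hlt : g (ginv (Hb β)) < g β := by
    rw [hga]
    have := F_pos ⟨hβ0, hβ1⟩
    unfold g Hb
    linarith
  exact (g_strictMonoOn.lt_iff_lt ha0 hβ0.le).mp hlt
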